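/- Let q be a positive integer with q ≡ 3 (mod 8), let j be an integer with j² ≡ −2 (mod q), and let (x1, x2, x3, x4) ∈ ℤ⁴ be a nonzero tuple satisfying x3 ≡ −2·x1 + j·(2·x2 + x4) (mod q). Then (2x1 + x3)² + 2·(2x2 + x4)² + q·(x3² + 2·x4²) ≥ 4·q. -/
import Mathlib

lemma odd_sq_mod8 (a : ℤ) (h : a % 2 = 1) : a ^ 2 % 8 = 1 := by
  obtain ⟨m, rfl⟩ : ∃ m, a = 2*m + 1 := ⟨a / 2, by omega⟩
  obtain ⟨t, ht⟩ := Int.even_mul_succ_self m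
  have hh : (2*m+1)^2 = 8*t + 1 := by linear_combination 4*ht
  rw [hh]; omega

lemma even_sq_mod4 (a : ℤ) (h : a % 2 = 0) : a ^ 2 % 4 = 0 := by
  obtain ⟨m, rfl⟩ : ∃ m, a = 2*m := ⟨a / 2, by omega⟩
  have hh : (2*m)^2 = 4*(m*m) := by ring
  rw [hh]
  exact Int.mul_emod_right 4 _

lemma keyA (q k T : ℤ) (hq8 : q % 8 = 3) (hk : 4*T = q*k) (hT : 1 ≤ T)
    (hk0 : 0 ≤ k) (hkb : k ≤ 3) : False := by
  interval_cases k <;> omega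

lemma keyB (q k A B C3 C4 : ℤ) (hq8 : q % 8 = 3) (hk : A + 2*B = q*k)
    (hA : 0 ≤ A) (hB : 0 ≤ B) (hC3 : 0 ≤ C3) (hC4 : 0 ≤ C4) (hk0 : 0 ≤ k)
    (hlt : k + (C3 + 2*C4) < 4) (hc1 : 1 ≤ C3 + 2*C4)
    (h3 : A % 8 = 1 ∧ C3 % 8 = 1 ∨ A % 4 = 0 ∧ C3 % 4 = 0)
    (h4 : B % 8 = 1 ∧ C4 % 8 = 1 ∨ B % 4 = 0 ∧ C4 % 4 = 0) : False := by
  have hk2 : k ≤ 2 := by omega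
  rcases h3 with ⟨h3a, h3c⟩ | ⟨h3a, h3c⟩ <;>
    rcases h4 with ⟨h4a, h4c⟩ | ⟨h4a, h4c⟩ <;>
    interval_cases k <;> omega

/-- Let `q ≡ 3 (mod 8)` be positive, `j² ≡ −2 (mod q)`, and `(x1,x2,x3,x4) ∈ ℤ⁴` nonzero
with `x3 ≡ −2x1 + j(2x2+x4) (mod q)`. Then
`(2x1+x3)² + 2(2x2+x4)² + q(x3² + 2x4²) ≥ 4q`. -/
theorem stmt_9 (q : ℤ) (hq : 0 < q) (hq8 : q % 8 = 3) (j : ℤ) (hj : j ^ 2 ≡ -2 [ZMOD q])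
    (x1 x2 x3 x4 : ℤ) (hx0 : ¬ (x1 = 0 ∧ x2 = 0 ∧ x3 = 0 ∧ x4 = 0))
    (hx : x3 ≡ -2 * x1 + j * (2 * x2 + x4) [ZMOD q]) :
    4 * q ≤ (2 * x1 + x3) ^ 2 + 2 * (2 * x2 + x4) ^ 2 + q * (x3 ^ 2 + 2 * x4 ^ 2) := by
  have h1 : (2*x1+x3) ≡ j*(2*x2+x4) [ZMOD q] := by
    calc 2*x1+x3 ≡ 2*x1 + (-2*x1 + j*(2*x2+x4)) [ZMOD q] := Int.ModEq.add_left _ hx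
      _ = j*(2*x2+x4) := by ring
  have h2 : (2*x1+x3)^2 + 2*(2*x2+x4)^2 ≡ 0 [ZMOD q] := by
    calc (2*x1+x3)^2 + 2*(2*x2+x4)^2
        ≡ (j*(2*x2+x4))^2 + 2*(2*x2+x4)^2 [ZMOD q] :=
          Int.ModEq.add_right _ (h1.pow 2)
      _ = j^2*(2*x2+x4)^2 + 2*(2*x2+x4)^2 := by ring
      _ ≡ -2*(2*x2+x4)^2 + 2*(2*x2+x4)^2 [ZMOD q] :=
          Int.ModEq.add_right _ (hj.mul_right _)
      _ = 0 := by ring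
  obtain ⟨k, hk⟩ := Int.modEq_zero_iff_dvd.mp h2
  have hk0 : 0 ≤ k := by
    nlinarith [sq_nonneg (2*x1+x3), sq_nonneg (2*x2+x4), hk]
  by_cases hA : x3 = 0 ∧ x4 = 0
  · obtain ⟨rfl, rfl⟩ := hA
    have h12 : x1 ≠ 0 ∨ x2 ≠ 0 := by
      by_contra h
      push_neg at h
      exact hx0 ⟨h.1, h.2, rfl, rfl⟩
    have hT : 1 ≤ x1^2 + 2*x2^2 := by
      rcases h12 with h | h
      · nlinarith [sq_nonneg x2, (by positivity : 0 < x1^2)]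
      · nlinarith [sq_nonneg x1, (by positivity : 0 < x2^2)]
    have hk' : 4*(x1^2 + 2*x2^2) = q*k := by linear_combination hk
    have hk4 : 4 ≤ k := by
      by_contra h
      push_neg at h
      exact keyA q k _ hq8 hk' hT hk0 (by omega)
    have := mul_le_mul_of_nonneg_left hk4 hq.le
    linarith [hk]
  · have h34 : x3 ≠ 0 ∨ x4 ≠ 0 := by tauto
    have hc1 : 1 ≤ x3^2 + 2*x4^2 := by
      rcases h34 with h | h
      · nlinarith [sq_nonneg x4, (by positivity : 0 < x3^2)]
      · nlinarith [sq_nonneg x3, (by positivity : 0 < x4^2)]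
    have hks : 4 ≤ k + (x3^2 + 2*x4^2) := by
      by_contra hlt
      push_neg at hlt
      have h3 : (2*x1+x3)^2 % 8 = 1 ∧ x3^2 % 8 = 1 ∨
          (2*x1+x3)^2 % 4 = 0 ∧ x3^2 % 4 = 0 := by
        rcases Int.even_or_odd x3 with ⟨m, hm⟩ | ⟨m, hm⟩
        · exact Or.inr ⟨even_sq_mod4 _ (by omega), even_sq_mod4 _ (by omega)⟩
        · exact Or.inl ⟨odd_sq_mod8 _ (by omega), odd_sq_mod8 _ (by omega)⟩
      have h4 : (2*x2+x4)^2 % 8 = 1 ∧ x4^2 % 8 = 1 ∨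
          (2*x2+x4)^2 % 4 = 0 ∧ x4^2 % 4 = 0 := by
        rcases Int.even_or_odd x4 with ⟨m, hm⟩ | ⟨m, hm⟩
        · exact Or.inr ⟨even_sq_mod4 _ (by omega), even_sq_mod4 _ (by omega)⟩
        · exact Or.inl ⟨odd_sq_mod8 _ (by omega), odd_sq_mod8 _ (by omega)⟩
      exact keyB q k _ _ _ _ hq8 hk (sq_nonneg _) (sq_nonneg _) (sq_nonneg _)
        (sq_nonneg _) hk0 hlt hc1 h3 h4
    have := mul_le_mul_of_nonneg_left hks hq.le
    linarith [hk]
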